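/- Let N be a left H-module and equip Hom_k(H, N) with the left H-module structure (x·φ)(h) = x⁽²⁾·φ(S(x⁽³⁾) h x⁽¹⁾). Define ς : N → Hom_k(H, N) by ς(n)(h) = h·n, and m(Φ)(h) = Φ(h⁽¹⁾)(h⁽²⁾) for k-linear Φ : H → Hom_k(H, N). Then: (i) ς is H-linear; (ii) ς is central with respect to m: for every φ ∈ Hom_k(H, N), m(h ↦ h·φ) = m(h ↦ ς(φ(h))), both sides being h ↦ h⁽²⁾·φ(h⁽¹⁾). -/

import Mathlib

/-!
# Statement 10

`k` a field, `H` a Hopf algebra over `k`, `N` a left `H`-module.  Equip `Hom_k(H, N)` with the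
left `H`-module structure `(x · φ)(h) = x⁽²⁾ • φ (S(x⁽³⁾) h x⁽¹⁾)` (the `A = H`, both coactions
`= Δ`, case of the monad on modules).  Define `ς : N → Hom_k(H, N)`, `ς(n)(h) = h • n`, and let
`m(Φ)(h) = Φ(h⁽¹⁾)(h⁽²⁾)`.  Then (i) `ς` is `H`-linear, and (ii) `ς` is central with respect
to `m`: `m(h ↦ h · φ) = m(h ↦ ς(φ(h)))`, both sides being `h ↦ h⁽²⁾ • φ(h⁽¹⁾)`.
-/

open TensorProduct

noncomputable section

variable (k : Type) [Field k]

/-- The curried action of a `k`-algebra `R` on a module `V`, as a `k`-bilinear map. -/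
def csmul (R : Type) [Ring R] [Algebra k R] (V : Type) [AddCommGroup V] [Module k V]
    [Module R V] [IsScalarTower k R V] [SMulCommClass k R V] : R →ₗ[k] V →ₗ[k] V where
  toFun r :=
    { toFun := fun v => r • v
      map_add' := smul_add r
      map_smul' := fun c v => (smul_comm c r v).symm }
  map_add' r r' := LinearMap.ext fun v => add_smul r r' v
  map_smul' c r := LinearMap.ext fun v => smul_assoc c r v

variable (H : Type) [Ring H] [HopfAlgebra k H]

/-- `H ⊗ H →ₗ End_k(H)`, `u ⊗ v ↦ (x ↦ u * x * v)`. -/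
def sandwich : H ⊗[k] H →ₗ[k] (H →ₗ[k] H) :=
  (TensorProduct.lift (LinearMap.llcomp k H H H)) ∘ₗ
    (TensorProduct.map (LinearMap.mul k H) (LinearMap.mul k H).flip)

/-- `H ⊗ H →ₗ End_k(Hom_k(H, W))`, `u ⊗ v ↦ (φ ↦ (x ↦ φ (u * x * v)))`. -/
def sandwichHom (W : Type) [AddCommGroup W] [Module k W] :
    H ⊗[k] H →ₗ[k] (H →ₗ[k] W) →ₗ[k] (H →ₗ[k] W) :=
  (LinearMap.llcomp k H H W).flip ∘ₗ sandwich k H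

/-- `H →ₗ H ⊗ (H ⊗ H)`, `x ↦ x⁽²⁾ ⊗ (S(x⁽³⁾) ⊗ x⁽¹⁾)`. -/
def deltaSH : H →ₗ[k] H ⊗[k] (H ⊗[k] H) :=
  (LinearMap.lTensor H (LinearMap.rTensor H (HopfAlgebra.antipode (R := k)))) ∘ₗ
    (LinearMap.lTensor H (TensorProduct.comm k H H).toLinearMap) ∘ₗ
    (TensorProduct.assoc k H H H).toLinearMap ∘ₗ
    (LinearMap.rTensor H (TensorProduct.comm k H H).toLinearMap) ∘ₗ
    (LinearMap.rTensor H (Coalgebra.comul (R := k))) ∘ₗ (Coalgebra.comul (R := k))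

variable (N : Type) [AddCommGroup N] [Module k N] [Module H N]
  [IsScalarTower k H N] [SMulCommClass k H N]

/-- The left `H`-module structure on `Hom_k(H, N)`: `(x · φ)(h) = x⁽²⁾ • φ (S(x⁽³⁾) h x⁽¹⁾)`. -/
def hAct : H →ₗ[k] (H →ₗ[k] N) →ₗ[k] (H →ₗ[k] N) :=
  (TensorProduct.lift
      (((LinearMap.llcomp k (H →ₗ[k] N) (H →ₗ[k] N) (H →ₗ[k] N)).comp
          ((LinearMap.llcomp k H N N) ∘ₗ (csmul k H N))).compl₂ (sandwichHom k H N))) ∘ₗ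
    deltaSH k H

/-- Evaluation `Hom_k(H, W) ⊗ H →ₗ W`. -/
def evalMap (W : Type) [AddCommGroup W] [Module k W] :
    (H →ₗ[k] W) ⊗[k] H →ₗ[k] W :=
  TensorProduct.lift LinearMap.id

/-- `m : Hom_k(H, Hom_k(H, W)) →ₗ Hom_k(H, W)`, `m(Φ)(h) = Φ(h⁽¹⁾)(h⁽²⁾)`. -/
def Mmap (W : Type) [AddCommGroup W] [Module k W] :
    (H →ₗ[k] (H →ₗ[k] W)) →ₗ[k] (H →ₗ[k] W) :=
  (LinearMap.lcomp k W (Coalgebra.comul (R := k) (A := H))) ∘ₗ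
    (LinearMap.llcomp k (H ⊗[k] H) ((H →ₗ[k] W) ⊗[k] H) W (evalMap k H W)) ∘ₗ
    (LinearMap.rTensorHom (M := H) (N := H) (P := H →ₗ[k] W))

/-- `ς : N →ₗ Hom_k(H, N)`, `ς(n)(h) = h • n`. -/
def sigmaMap : N →ₗ[k] (H →ₗ[k] N) := (csmul k H N).flip

/-- `h ↦ h⁽²⁾ • φ(h⁽¹⁾)`. -/
def diagExpr (φ : H →ₗ[k] N) : H →ₗ[k] N :=
  (TensorProduct.lift (csmul k H N)) ∘ₗ (TensorProduct.comm k N H).toLinearMap ∘ₗ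
    (LinearMap.rTensor H φ) ∘ₗ (Coalgebra.comul (R := k))


/-! ### Auxiliary lemmas -/

set_option maxHeartbeats 1000000
set_option synthInstance.maxHeartbeats 400000

open Coalgebra HopfAlgebra LinearMap

lemma sigmaMap_apply (n : N) (h : H) : sigmaMap k H N n h = h • n := rfl

lemma sandwich_tmul (u v x : H) : sandwich k H (u ⊗ₜ[k] v) x = u * x * v := by
  simp [sandwich, mul_assoc]

lemma sandwichHom_tmul (W : Type) [AddCommGroup W] [Module k W] (u v : H) (φ : H →ₗ[k] W)
    (h : H) : sandwichHom k H W (u ⊗ₜ[k] v) φ h = φ (u * h * v) := by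
  simp [sandwichHom, sandwich_tmul]

lemma deltaSH_repr (x : H) (r : Coalgebra.Repr k x (H × H))
    (rR : ∀ i, Coalgebra.Repr k (r.right i) (H × H)) :
    deltaSH k H x = ∑ i ∈ r.index, ∑ j ∈ (rR i).index,
      (rR i).left j ⊗ₜ[k]
        ((HopfAlgebra.antipode (R := k) ((rR i).right j)) ⊗ₜ[k] r.left i) := by
  have h1 : LinearMap.rTensor H (Coalgebra.comul (R := k)) (Coalgebra.comul (R := k) x)
      = (TensorProduct.assoc k H H H).symm
          (LinearMap.lTensor H (Coalgebra.comul (R := k)) (Coalgebra.comul (R := k) x)) :=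
    (Coalgebra.coassoc_symm_apply x).symm
  simp only [deltaSH, LinearMap.comp_apply, h1]
  rw [← r.eq]
  simp only [map_sum, LinearMap.lTensor_tmul]
  rw [Finset.sum_congr rfl (fun i _ => by
    rw [← (rR i).eq, TensorProduct.tmul_sum] : ∀ i ∈ r.index, _ = _)]
  simp only [map_sum, TensorProduct.assoc_symm_tmul, LinearMap.rTensor_tmul,
    TensorProduct.comm_tmul, TensorProduct.assoc_tmul, LinearMap.lTensor_tmul,
    LinearEquiv.coe_coe]

lemma hAct_repr (x : H) (r : Coalgebra.Repr k x (H × H)) (rR : ∀ i, Coalgebra.Repr k (r.right i) (H × H))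
    (ψ : H →ₗ[k] N) (h : H) :
    hAct k H N x ψ h = ∑ i ∈ r.index, ∑ j ∈ (rR i).index,
      (rR i).left j • ψ ((HopfAlgebra.antipode (R := k) ((rR i).right j)) * h * r.left i) := by
  have e : hAct k H N x = (TensorProduct.lift
      (((LinearMap.llcomp k (H →ₗ[k] N) (H →ₗ[k] N) (H →ₗ[k] N)).comp
          ((LinearMap.llcomp k H N N) ∘ₗ (csmul k H N))).compl₂ (sandwichHom k H N)))
      (deltaSH k H x) := rfl
  rw [e, deltaSH_repr k H x r rR]
  simp [csmul, sandwichHom_tmul]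

lemma Mmap_repr (W : Type) [AddCommGroup W] [Module k W]
    (Φ : H →ₗ[k] (H →ₗ[k] W)) (h : H) (r : Coalgebra.Repr k h (H × H)) :
    Mmap k H W Φ h = ∑ i ∈ r.index, Φ (r.left i) (r.right i) := by
  have e : Mmap k H W Φ h = evalMap k H W (LinearMap.rTensor H Φ (Coalgebra.comul (R := k) h)) :=
    rfl
  rw [e, ← r.eq]
  simp [evalMap]

lemma diagExpr_repr (φ : H →ₗ[k] N) (h : H) (r : Coalgebra.Repr k h (H × H)) :
    diagExpr k H N φ h = ∑ i ∈ r.index, r.right i • φ (r.left i) := by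
  simp only [diagExpr, LinearMap.comp_apply]
  rw [← r.eq]
  simp [csmul, TensorProduct.comm_tmul]

lemma sum_counit_smul (x : H) (r : Coalgebra.Repr k x (H × H)) :
    ∑ i ∈ r.index, Coalgebra.counit (R := k) (r.right i) • r.left i = x := by
  have h1 := congrArg (TensorProduct.rid k H) (Coalgebra.sum_tmul_counit_eq r)
  simpa only [map_sum, TensorProduct.rid_tmul, one_smul] using h1

/-- `d ⊗ b ↦ d⁽¹⁾ ⊗ (S(d⁽²⁾) * b)`. -/
noncomputable def Pmap : H ⊗[k] H →ₗ[k] H ⊗[k] H :=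
  (LinearMap.lTensor H ((LinearMap.mul' k H) ∘ₗ
      (LinearMap.rTensor H (HopfAlgebra.antipode (R := k))))) ∘ₗ
    (TensorProduct.assoc k H H H).toLinearMap ∘ₗ
    (LinearMap.rTensor H (Coalgebra.comul (R := k)))

lemma Pmap_tmul (d b : H) (s : Coalgebra.Repr k d (H × H)) :
    Pmap k H (d ⊗ₜ[k] b) = ∑ l ∈ s.index,
      s.left l ⊗ₜ[k] ((HopfAlgebra.antipode (R := k) (s.right l)) * b) := by
  simp only [Pmap, LinearMap.comp_apply, LinearMap.rTensor_tmul, LinearEquiv.coe_coe]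
  rw [← s.eq]
  simp [TensorProduct.sum_tmul, TensorProduct.assoc_tmul]

lemma Pmap_comul (b : H) (s : Coalgebra.Repr k b (H × H)) :
    Pmap k H (Coalgebra.comul (R := k) b) = ∑ j ∈ s.index,
      s.left j ⊗ₜ[k] (algebraMap k H (Coalgebra.counit (R := k) (s.right j))) := by
  have h1 : (TensorProduct.assoc k H H H)
      (LinearMap.rTensor H (Coalgebra.comul (R := k)) (Coalgebra.comul (R := k) b))
      = LinearMap.lTensor H (Coalgebra.comul (R := k)) (Coalgebra.comul (R := k) b) :=
    Coalgebra.coassoc_apply b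
  simp only [Pmap, LinearMap.comp_apply, LinearEquiv.coe_coe, h1]
  rw [← s.eq]
  simp only [map_sum, LinearMap.lTensor_tmul, LinearMap.comp_apply]
  refine Finset.sum_congr rfl fun j _ => ?_
  congr 1
  exact HopfAlgebra.mul_antipode_rTensor_comul_apply (s.right j)

/-- `x1 ⊗ (x2 ⊗ x3) ↦ x2 • φ (x3 * x1)`. -/
noncomputable def Wmap (φ : H →ₗ[k] N) : H ⊗[k] (H ⊗[k] H) →ₗ[k] N :=
  TensorProduct.lift ((TensorProduct.lift.equiv (RingHom.id k) H H N).toLinearMap ∘ₗ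
    (LinearMap.lcomp k (H →ₗ[k] N) (csmul k H N)) ∘ₗ (LinearMap.llcomp k H N N).flip ∘ₗ
    ((LinearMap.llcomp k H H N φ) ∘ₗ (LinearMap.mul k H).flip))

lemma Wmap_tmul (φ : H →ₗ[k] N) (x1 x2 x3 : H) :
    Wmap k H N φ (x1 ⊗ₜ[k] (x2 ⊗ₜ[k] x3)) = x2 • φ (x3 * x1) := by
  simp [Wmap, csmul]

theorem stmt10 :
    -- (i) `ς` is `H`-linear
    (∀ (x : H) (n : N), sigmaMap k H N (x • n) = hAct k H N x (sigmaMap k H N n))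
    -- (ii) `ς` is central with respect to `m`, both sides being `h ↦ h⁽²⁾ • φ(h⁽¹⁾)`
    ∧ (∀ φ : H →ₗ[k] N,
        Mmap k H N ((hAct k H N).flip φ) = diagExpr k H N φ
        ∧ Mmap k H N (sigmaMap k H N ∘ₗ φ) = diagExpr k H N φ) := by
  constructor
  · -- (i)
    intro x n
    ext h
    set r := ℛ k x with hr
    set rR := fun i => ℛ k (r.right i) with hrR
    rw [hAct_repr k H N x r rR, sigmaMap_apply]
    have key : ∀ i ∈ r.index,
        ∑ j ∈ (rR i).index, (rR i).left j •
          sigmaMap k H N n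
            ((HopfAlgebra.antipode (R := k) ((rR i).right j)) * h * r.left i)
        = (h * (Coalgebra.counit (R := k) (r.right i) • r.left i)) • n := by
      intro i _
      have step1 : ∀ j ∈ (rR i).index, (rR i).left j •
          sigmaMap k H N n
            ((HopfAlgebra.antipode (R := k) ((rR i).right j)) * h * r.left i)
          = ((rR i).left j * HopfAlgebra.antipode (R := k) ((rR i).right j)) •
              ((h * r.left i) • n) := by
        intro j _
        rw [sigmaMap_apply, smul_smul, smul_smul]
        congr 1
        simp [mul_assoc]
      rw [Finset.sum_congr rfl step1, ← Finset.sum_smul,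
        HopfAlgebra.sum_mul_antipode_eq_algebraMap_counit (rR i), algebraMap_smul, mul_smul_comm, smul_assoc]
    rw [Finset.sum_congr rfl key, ← Finset.sum_smul, ← Finset.mul_sum,
      sum_counit_smul k H x r, mul_smul]
  · -- (ii)
    intro φ
    constructor
    · -- m (h ↦ h · φ) = diagExpr
      ext h
      set r := ℛ k h with hr
      set rL := fun i => ℛ k (r.left i) with hrL
      set rLd := fun i => fun j => ℛ k ((rL i).right j) with hrLd
      set rR := fun i => ℛ k (r.right i) with hrR
      rw [Mmap_repr k H N ((hAct k H N).flip φ) h r, diagExpr_repr k H N φ h r]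
      have lhs1 : ∀ i ∈ r.index, (hAct k H N).flip φ (r.left i) (r.right i)
          = Wmap k H N φ (∑ j ∈ (rL i).index,
              (rL i).left j ⊗ₜ[k] Pmap k H ((rL i).right j ⊗ₜ[k] r.right i)) := by
        intro i _
        rw [LinearMap.flip_apply, hAct_repr k H N (r.left i) (rL i) (rLd i), map_sum]
        refine Finset.sum_congr rfl fun j _ => ?_
        rw [Pmap_tmul k H _ _ (rLd i j), TensorProduct.tmul_sum, map_sum]
        refine Finset.sum_congr rfl fun l _ => ?_
        rw [Wmap_tmul]
      calc ∑ i ∈ r.index, (hAct k H N).flip φ (r.left i) (r.right i)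
          = Wmap k H N φ ((LinearMap.lTensor H (Pmap k H))
              (∑ i ∈ r.index, ∑ j ∈ (rL i).index,
                (rL i).left j ⊗ₜ[k] ((rL i).right j ⊗ₜ[k] r.right i))) := by
            rw [Finset.sum_congr rfl lhs1]
            simp only [map_sum, LinearMap.lTensor_tmul]
        _ = Wmap k H N φ ((LinearMap.lTensor H (Pmap k H))
              (∑ i ∈ r.index, ∑ j ∈ (rR i).index,
                r.left i ⊗ₜ[k] ((rR i).left j ⊗ₜ[k] (rR i).right j))) := by
            rw [Coalgebra.sum_tmul_tmul_eq r rL rR]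
        _ = ∑ i ∈ r.index, Wmap k H N φ
              (r.left i ⊗ₜ[k] Pmap k H (Coalgebra.comul (R := k) (r.right i))) := by
            simp only [map_sum, LinearMap.lTensor_tmul]
            refine Finset.sum_congr rfl fun i _ => ?_
            rw [← (rR i).eq, map_sum, TensorProduct.tmul_sum, map_sum]
        _ = ∑ i ∈ r.index, r.right i • φ (r.left i) := by
            refine Finset.sum_congr rfl fun i _ => ?_
            rw [Pmap_comul k H _ (rR i), TensorProduct.tmul_sum, map_sum]
            calc ∑ j ∈ (rR i).index, Wmap k H N φ (r.left i ⊗ₜ[k]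
                  ((rR i).left j ⊗ₜ[k] algebraMap k H (Coalgebra.counit (R := k) ((rR i).right j))))
                = ∑ j ∈ (rR i).index,
                    (Coalgebra.counit (R := k) ((rR i).right j) • (rR i).left j) • φ (r.left i) := by
                  refine Finset.sum_congr rfl fun j _ => ?_
                  rw [Wmap_tmul, ← Algebra.smul_def, map_smul, smul_comm, smul_assoc]
              _ = r.right i • φ (r.left i) := by
                  rw [← Finset.sum_smul, sum_counit_smul k H _ (rR i)]
    · -- m (h ↦ ς (φ h)) = diagExpr
      ext h
      set r := ℛ k h with hr
      rw [Mmap_repr k H N (sigmaMap k H N ∘ₗ φ) h r, diagExpr_repr k H N φ h r]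
      simp [sigmaMap_apply]


end
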